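/- Let Γ be a countable group and f ∈ ℤ[Γ] a weakly expansive polynomial. Then the element ω ∈ C₀(Γ) with fω = 1_Γ is unique, and moreover ω f = 1_Γ as well. -/

import Mathlib

open Filter Topology

/-- Convolution: `(f * g)(γ) = ∑ δ, f (γ δ⁻¹) g δ`. -/
noncomputable def conv {Γ : Type*} [Group Γ] (f g : Γ → ℝ) : Γ → ℝ :=
  fun γ => ∑' δ : Γ, f (γ * δ⁻¹) * g δ

open scoped Classical in
/-- The delta function at the identity, the unit for convolution. -/
noncomputable def delta1 (Γ : Type*) [Group Γ] : Γ → ℝ :=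
  fun γ => if γ = 1 then 1 else 0

/-- `f` is weakly expansive: (we-1) convolution by `f` is injective on `C₀(Γ)`, and
(we-2) `f` has a right convolution-inverse in `C₀(Γ)`. -/
def WeaklyExpansive {Γ : Type*} [Group Γ] (f : Γ → ℝ) : Prop :=
  (∀ g : Γ → ℝ, Tendsto g cofinite (𝓝 0) → conv f g = 0 → g = 0) ∧
  (∃ ω : Γ → ℝ, Tendsto ω cofinite (𝓝 0) ∧ conv f ω = delta1 Γ)

/-- If `f` has finite support, `conv g f` is a finite sum over the support of `f`. -/
lemma conv_right_eq {Γ : Type*} [Group Γ] (f g : Γ → ℝ)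
    (hf : (Function.support f).Finite) (γ : Γ) :
    conv g f γ = ∑ s ∈ hf.toFinset, g (γ * s⁻¹) * f s := by
  unfold conv
  apply tsum_eq_sum
  intro s hs
  have : f s = 0 := by
    by_contra h
    exact hs (hf.mem_toFinset.mpr h)
  simp [this]

/-- If `f` has finite support, `conv f g` is a finite sum over the support of `f`. -/
lemma conv_left_eq {Γ : Type*} [Group Γ] (f g : Γ → ℝ)
    (hf : (Function.support f).Finite) (γ : Γ) :
    conv f g γ = ∑ s ∈ hf.toFinset, f s * g (s⁻¹ * γ) := by
  unfold conv
  rw [← Equiv.tsum_eq ((Equiv.inv Γ).trans (Equiv.mulRight γ))]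
  have key : ∀ s : Γ, f (γ * (((Equiv.inv Γ).trans (Equiv.mulRight γ)) s)⁻¹) *
      g (((Equiv.inv Γ).trans (Equiv.mulRight γ)) s) = f s * g (s⁻¹ * γ) := by
    intro s
    simp only [Equiv.trans_apply, Equiv.inv_apply, Equiv.coe_mulRight]
    congr 1
    congr 1
    group
  calc ∑' s : Γ, f (γ * (((Equiv.inv Γ).trans (Equiv.mulRight γ)) s)⁻¹) *
      g (((Equiv.inv Γ).trans (Equiv.mulRight γ)) s)
      = ∑' s : Γ, f s * g (s⁻¹ * γ) := tsum_congr key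
    _ = ∑ s ∈ hf.toFinset, f s * g (s⁻¹ * γ) := by
        apply tsum_eq_sum
        intro s hs
        have : f s = 0 := by
          by_contra h
          exact hs (hf.mem_toFinset.mpr h)
        simp [this]

/-- Left convolution by a finitely supported `f` is subtractive in the second argument. -/
lemma conv_sub {Γ : Type*} [Group Γ] (f g h : Γ → ℝ)
    (hf : (Function.support f).Finite) :
    conv f (g - h) = conv f g - conv f h := by
  funext γ
  rw [Pi.sub_apply, conv_left_eq f (g - h) hf γ, conv_left_eq f g hf γ,
    conv_left_eq f h hf γ, ← Finset.sum_sub_distrib]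
  apply Finset.sum_congr rfl
  intro s _
  simp [mul_sub]

/-- `delta1` is a right unit for convolution. -/
lemma conv_delta_right {Γ : Type*} [Group Γ] (f : Γ → ℝ) :
    conv f (delta1 Γ) = f := by
  funext γ
  unfold conv delta1
  rw [tsum_eq_single 1]
  · simp
  · intro δ hδ
    simp [hδ]

/-- `delta1` is a left unit for convolution. -/
lemma conv_delta_left {Γ : Type*} [Group Γ] (f : Γ → ℝ) :
    conv (delta1 Γ) f = f := by
  funext γ
  unfold conv delta1
  rw [tsum_eq_single γ]
  · simp
  · intro δ hδ
    have : γ * δ⁻¹ ≠ 1 := by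
      intro h
      exact hδ (mul_inv_eq_one.mp h).symm
    simp [this]

/-- Associativity in the case needed: both outer factors are the finitely supported `f`. -/
lemma conv_assoc_special {Γ : Type*} [Group Γ] (f ω : Γ → ℝ)
    (hf : (Function.support f).Finite) :
    conv f (conv ω f) = conv (conv f ω) f := by
  funext γ
  rw [conv_left_eq f (conv ω f) hf γ, conv_right_eq f (conv f ω) hf γ]
  have hL : ∀ s ∈ hf.toFinset, f s * conv ω f (s⁻¹ * γ) =
      ∑ t ∈ hf.toFinset, f s * (ω (s⁻¹ * γ * t⁻¹) * f t) := by
    intro s _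
    rw [conv_right_eq f ω hf (s⁻¹ * γ), Finset.mul_sum]
  have hR : ∀ t ∈ hf.toFinset, conv f ω (γ * t⁻¹) * f t =
      ∑ s ∈ hf.toFinset, f s * ω (s⁻¹ * (γ * t⁻¹)) * f t := by
    intro t _
    rw [conv_left_eq f ω hf (γ * t⁻¹), Finset.sum_mul]
  rw [Finset.sum_congr rfl hL, Finset.sum_congr rfl hR, Finset.sum_comm]
  apply Finset.sum_congr rfl
  intro s _
  apply Finset.sum_congr rfl
  intro t _
  simp [mul_assoc]

/-- `delta1` vanishes at infinity. -/
lemma delta1_c0 {Γ : Type*} [Group Γ] :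
    Tendsto (delta1 Γ) cofinite (𝓝 (0 : ℝ)) := by
  have h : ∀ᶠ γ in (cofinite : Filter Γ), delta1 Γ γ = 0 := by
    rw [eventually_cofinite]
    apply Set.Finite.subset (Set.finite_singleton (1 : Γ))
    intro γ hγ
    by_contra hne
    simp only [Set.mem_singleton_iff] at hne
    exact hγ (by simp [delta1, hne])
  exact tendsto_const_nhds.congr' (by filter_upwards [h] with γ hγ using hγ.symm)

/-- If `f` has finite support and `ω` vanishes at infinity, then `conv ω f` vanishes
at infinity. -/
lemma conv_right_c0 {Γ : Type*} [Group Γ] (f ω : Γ → ℝ)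
    (hf : (Function.support f).Finite) (hω : Tendsto ω cofinite (𝓝 0)) :
    Tendsto (conv ω f) cofinite (𝓝 0) := by
  have heq : conv ω f = fun γ => ∑ s ∈ hf.toFinset, ω (γ * s⁻¹) * f s :=
    funext fun γ => conv_right_eq f ω hf γ
  rw [heq]
  have : ∀ s ∈ hf.toFinset, Tendsto (fun γ : Γ => ω (γ * s⁻¹) * f s) cofinite (𝓝 0) := by
    intro s _
    have hmap : Tendsto (fun γ : Γ => γ * s⁻¹) cofinite cofinite :=
      (mul_left_injective (s⁻¹ : Γ)).tendsto_cofinite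
    have := (hω.comp hmap).mul_const (f s)
    simpa using this
  simpa using tendsto_finset_sum hf.toFinset this

/-- For `f ∈ ℤ[Γ]` weakly expansive, the element `ω ∈ C₀(Γ)` with `f ω = 1_Γ` is
unique, and it also satisfies `ω f = 1_Γ`. -/
theorem weaklyExpansive_inverse_unique_and_twoSided (Γ : Type*) [Group Γ] [Countable Γ]
    (f : Γ → ℝ)
    (hfin : (Function.support f).Finite) (hint : ∀ γ, ∃ m : ℤ, f γ = (m : ℝ))
    (hwe : WeaklyExpansive f) :
    (∀ ω ω' : Γ → ℝ, Tendsto ω cofinite (𝓝 0) → Tendsto ω' cofinite (𝓝 0) →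
      conv f ω = delta1 Γ → conv f ω' = delta1 Γ → ω = ω') ∧
    (∀ ω : Γ → ℝ, Tendsto ω cofinite (𝓝 0) → conv f ω = delta1 Γ →
      conv ω f = delta1 Γ) := by
  obtain ⟨hinj, -⟩ := hwe
  constructor
  · intro ω ω' hω hω' h1 h2
    have hd : Tendsto (ω - ω') cofinite (𝓝 (0 : ℝ)) := by
      have := hω.sub hω'; rw [sub_zero] at this; exact this
    have hc : conv f (ω - ω') = 0 := by
      rw [conv_sub f ω ω' hfin, h1, h2, sub_self]
    have := hinj (ω - ω') hd hc
    exact sub_eq_zero.mp this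
  · intro ω hω h1
    have hg0 : Tendsto (conv ω f - delta1 Γ) cofinite (𝓝 (0 : ℝ)) := by
      have := (conv_right_c0 f ω hfin hω).sub delta1_c0; rw [sub_zero] at this; exact this
    have hc : conv f (conv ω f - delta1 Γ) = 0 := by
      rw [conv_sub f (conv ω f) (delta1 Γ) hfin, conv_delta_right,
        conv_assoc_special f ω hfin, h1, conv_delta_left, sub_self]
    have := hinj (conv ω f - delta1 Γ) hg0 hc
    exact sub_eq_zero.mp this
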